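/- Let 1 < p < q and φ(t) = t^(p/2-1) + t^(q/2-1). Then for all t > 0, ((δ_φ(t)+1)²)/(n-1) - 2t δ_φ'(t) ≤ (q-1)²/(n-1), where δ_φ(t) = 2tφ'(t)/φ(t) and n ≥ 2 is an integer. -/

import Mathlib

set_option maxHeartbeats 1000000
open Real Filter

/-- For φ(t) = t^(p/2-1) + t^(q/2-1) with 1 < p < q and n ≥ 2,
one has (δ_φ(t)+1)²/(n-1) - 2t δ_φ'(t) ≤ (q-1)²/(n-1) for all t > 0, where
δ_φ(t) = 2tφ'(t)/φ(t). -/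
theorem pq_condition_upper_bound (n : ℕ) (hn : 2 ≤ n) (p q : ℝ) (hp : 1 < p) (hpq : p < q) :
    ∀ t : ℝ, 0 < t →
      ((2 * t * deriv (fun s : ℝ => s ^ (p / 2 - 1) + s ^ (q / 2 - 1)) t /
            (t ^ (p / 2 - 1) + t ^ (q / 2 - 1)) + 1) ^ 2) / ((n : ℝ) - 1) -
        2 * t * deriv (fun s : ℝ =>
            2 * s * deriv (fun r : ℝ => r ^ (p / 2 - 1) + r ^ (q / 2 - 1)) s /
              (s ^ (p / 2 - 1) + s ^ (q / 2 - 1))) t ≤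
      (q - 1) ^ 2 / ((n : ℝ) - 1) := by
  intro t ht
  set a := p / 2 - 1 with ha
  set b := q / 2 - 1 with hb
  -- inner derivative on (0, ∞)
  have hderiv : ∀ s : ℝ, 0 < s →
      deriv (fun r : ℝ => r ^ a + r ^ b) s = a * s ^ (a - 1) + b * s ^ (b - 1) := by
    intro s hs
    exact ((Real.hasDerivAt_rpow_const (p := a) (Or.inl hs.ne')).add
      (Real.hasDerivAt_rpow_const (p := b) (Or.inl hs.ne'))).deriv
  have hst : ∀ s : ℝ, 0 < s → ∀ c : ℝ, s * s ^ (c - 1) = s ^ c := by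
    intro s hs c
    rw [show c = 1 + (c - 1) by ring, Real.rpow_add hs, Real.rpow_one]
    ring_nf
  -- δ equals explicit rational function near t
  have hEq : (fun s : ℝ => 2 * s * deriv (fun r : ℝ => r ^ a + r ^ b) s / (s ^ a + s ^ b))
      =ᶠ[nhds t] (fun s : ℝ => (2 * a * s ^ a + 2 * b * s ^ b) / (s ^ a + s ^ b)) := by
    filter_upwards [Ioi_mem_nhds ht] with s hs
    have hs' : (0:ℝ) < s := hs
    rw [hderiv s hs']
    congr 1
    rw [← hst s hs' a, ← hst s hs' b]
    ring
  have hphi : (0:ℝ) < t ^ a + t ^ b := by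
    have := Real.rpow_pos_of_pos ht a
    have := Real.rpow_pos_of_pos ht b
    linarith
  -- derivative of explicit function
  have hG : HasDerivAt (fun s : ℝ => (2 * a * s ^ a + 2 * b * s ^ b) / (s ^ a + s ^ b))
      (((2 * a * (a * t ^ (a - 1)) + 2 * b * (b * t ^ (b - 1))) * (t ^ a + t ^ b)
        - (2 * a * t ^ a + 2 * b * t ^ b) * (a * t ^ (a - 1) + b * t ^ (b - 1)))
        / (t ^ a + t ^ b) ^ 2) t := by
    have h1 : HasDerivAt (fun s : ℝ => s ^ a) (a * t ^ (a - 1)) t :=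
      Real.hasDerivAt_rpow_const (Or.inl ht.ne')
    have h2 : HasDerivAt (fun s : ℝ => s ^ b) (b * t ^ (b - 1)) t :=
      Real.hasDerivAt_rpow_const (Or.inl ht.ne')
    exact ((h1.const_mul (2 * a)).add (h2.const_mul (2 * b))).div (h1.add h2) hphi.ne'
  have hδ : deriv (fun s : ℝ =>
      2 * s * deriv (fun r : ℝ => r ^ a + r ^ b) s / (s ^ a + s ^ b)) t
      = ((2 * a * (a * t ^ (a - 1)) + 2 * b * (b * t ^ (b - 1))) * (t ^ a + t ^ b)
        - (2 * a * t ^ a + 2 * b * t ^ b) * (a * t ^ (a - 1) + b * t ^ (b - 1)))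
        / (t ^ a + t ^ b) ^ 2 := by
    rw [hEq.deriv_eq]; exact hG.deriv
  rw [hδ, hderiv t ht]
  set A := t ^ a with hA'
  set B := t ^ b with hB'
  have hA : (0:ℝ) < A := Real.rpow_pos_of_pos ht a
  have hB : (0:ℝ) < B := Real.rpow_pos_of_pos ht b
  have hta : t * t ^ (a - 1) = A := hst t ht a
  have htb : t * t ^ (b - 1) = B := hst t ht b
  set A1 := t ^ (a - 1) with hA1'
  set B1 := t ^ (b - 1) with hB1'
  have hA1 : A1 = A / t := by field_simp [← hta]; linarith
  have hB1 : B1 = B / t := by field_simp [← htb]; linarith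
  rw [hA1, hB1]
  have hn1 : (1:ℝ) ≤ (n : ℝ) - 1 := by
    have : (2:ℝ) ≤ (n : ℝ) := by exact_mod_cast hn
    linarith
  have hn0 : (0:ℝ) < (n : ℝ) - 1 := by linarith
  rw [← sub_nonneg]
  have key : (q - 1) ^ 2 / ((n : ℝ) - 1) -
      (((2 * t * (a * (A / t) + b * (B / t)) / (A + B) + 1) ^ 2) / ((n : ℝ) - 1) -
        2 * t * (((2 * a * (a * (A / t)) + 2 * b * (b * (B / t))) * (A + B)
          - (2 * a * A + 2 * b * B) * (a * (A / t) + b * (B / t))) / (A + B) ^ 2))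
      = (((q - 1) ^ 2 - (p - 1) ^ 2) * A ^ 2
          + (2 * (q - 1) * (q - p) + ((n : ℝ) - 1) * (q - p) ^ 2) * A * B)
        / (((n : ℝ) - 1) * (A + B) ^ 2) := by
    field_simp
    rw [ha, hb]
    ring_nf
  rw [key]
  apply div_nonneg
  · have e1 : 0 ≤ ((q - 1) ^ 2 - (p - 1) ^ 2) * A ^ 2 := by
      have h1 : 0 ≤ (q - 1) ^ 2 - (p - 1) ^ 2 := by nlinarith
      positivity
    have e2 : 0 ≤ (2 * (q - 1) * (q - p) + ((n : ℝ) - 1) * (q - p) ^ 2) * (A * B) := by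
      have h2 : 0 ≤ 2 * (q - 1) * (q - p) + ((n : ℝ) - 1) * (q - p) ^ 2 := by nlinarith
      exact mul_nonneg h2 (mul_pos hA hB).le
    nlinarith [e1, e2]
  · positivity
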